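/- Let n ≥ 2 be even and let V be a finite set of size n partitioned as V = X ⊔ Y with |X| = |Y| = n/2. Let B (blue edges) and R (red edges) be sets of unordered pairs of distinct elements of V such that every blue edge has both endpoints in X or both endpoints in Y, and every red edge has one endpoint in X and one in Y. Suppose that no admissible partition of V into three parts has a part strictly larger than both other parts. Then |B| ≥ n − 2. -/

import Mathlib

open Finset SimpleGraph

/-- A connected graph on a finite vertex set has at least `card V - 1` edges. -/
private lemma conn_card_le {V : Type*} [Fintype V] :
    ∀ (m : ℕ) (G : SimpleGraph V) [Fintype G.edgeSet],
      G.edgeFinset.card = m → G.Connected → Fintype.card V ≤ m + 1 := by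
  intro m
  induction m using Nat.strong_induction_on with
  | _ m ih =>
    intro G _ hm hconn
    classical
    by_cases hac : G.IsAcyclic
    · have ht : G.IsTree := ⟨hconn, hac⟩
      have := ht.card_edgeFinset
      omega
    · rw [isAcyclic_iff_forall_adj_isBridge] at hac
      push_neg at hac
      obtain ⟨v, w, hadj, hbr⟩ := hac
      have hreach : (G \ fromEdgeSet {s(v, w)}).Reachable v w := by
        by_contra hr
        exact hbr hr
      set G' := G \ fromEdgeSet {s(v, w)} with hG'
      have step : ∀ a b : V, G.Adj a b → G'.Reachable a b := by
        intro a b hab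
        by_cases he : s(a, b) = s(v, w)
        · rcases Sym2.eq_iff.mp he with ⟨rfl, rfl⟩ | ⟨rfl, rfl⟩
          · exact hreach
          · exact hreach.symm
        · refine Adj.reachable ?_
          rw [hG', sdiff_adj]
          exact ⟨hab, by simp [fromEdgeSet_adj, he]⟩
      have hpre : G'.Preconnected := by
        intro x y
        obtain ⟨p⟩ := hconn.preconnected x y
        induction p with
        | nil => exact Reachable.refl _
        | cons h q ihq => exact (step _ _ h).trans ihq
      have hne : Nonempty V := hconn.nonempty
      have hconn' : G'.Connected := ⟨hpre⟩
      have hES : G'.edgeSet = G.edgeSet \ {s(v, w)} := by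
        rw [hG', edgeSet_sdiff, edgeSet_fromEdgeSet, edgeSet_sdiff_sdiff_isDiag]
      letI : Fintype G'.edgeSet := Fintype.ofFinite _
      have hedge : G'.edgeFinset = G.edgeFinset.erase s(v, w) := by
        ext e
        simp only [mem_edgeFinset, Finset.mem_erase, hES, Set.mem_diff,
          Set.mem_singleton_iff]
        tauto
      have hmemE : s(v, w) ∈ G.edgeFinset := mem_edgeFinset.mpr hadj
      have hm1 : G'.edgeFinset.card = m - 1 := by
        rw [hedge, Finset.card_erase_of_mem hmemE, hm]
      have hmpos : 1 ≤ m := by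
        rw [← hm]
        exact Finset.card_pos.mpr ⟨s(v, w), hmemE⟩
      have := ih (m - 1) (by omega) G' hm1 hconn'
      omega

/-- The blue graph restricted to one side. -/
private def blueGraph {V : Type*} (X : Finset V) (B : Finset (Sym2 V)) :
    SimpleGraph {x // x ∈ X} where
  Adj u v := u.1 ≠ v.1 ∧ s(u.1, v.1) ∈ B
  symm := ⟨by
    rintro u v ⟨h1, h2⟩
    exact ⟨h1.symm, by rwa [Sym2.eq_swap]⟩⟩
  loopless := ⟨fun u h => h.1 rfl⟩

private lemma side_preconnected {V : Type*} [Fintype V] [DecidableEq V]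
    (X : Finset V) (B R : Finset (Sym2 V))
    (hXcard : 2 * X.card = Fintype.card V)
    (hB : ∀ u v : V, s(u, v) ∈ B → (u ∈ X ↔ v ∈ X))
    (hR : ∀ u v : V, s(u, v) ∈ R → (u ∈ X ↔ v ∉ X))
    (hnoplur : ∀ p : V → Fin 3,
      (∀ u v : V, s(u, v) ∈ B → p u = p v) →
      (∀ u v : V, s(u, v) ∈ R → p u ≠ p v) →
      ¬ ∃ i : Fin 3, ∀ j : Fin 3, j ≠ i →
          (Finset.univ.filter fun x => p x = j).card <
            (Finset.univ.filter fun x => p x = i).card) :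
    (blueGraph X B).Preconnected := by
  classical
  by_contra h
  simp only [Preconnected, not_forall] at h
  obtain ⟨a, b, hab⟩ := h
  set G := blueGraph X B with hG
  set C : Finset V :=
    (Finset.univ.filter fun x : {x // x ∈ X} => G.Reachable a x).image Subtype.val with hC
  have hCX : C ⊆ X := by
    intro x hx
    rw [hC] at hx
    obtain ⟨x', _, rfl⟩ := Finset.mem_image.mp hx
    exact x'.2
  have hmemC : ∀ x : {x // x ∈ X}, x.1 ∈ C ↔ G.Reachable a x := by
    intro x
    rw [hC]
    constructor
    · intro hx
      obtain ⟨x', hx', hval⟩ := Finset.mem_image.mp hx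
      have hxx : x' = x := Subtype.ext hval
      subst hxx
      exact (Finset.mem_filter.mp hx').2
    · intro hr
      exact Finset.mem_image.mpr ⟨x, Finset.mem_filter.mpr ⟨Finset.mem_univ _, hr⟩, rfl⟩
  have haC : a.1 ∈ C := (hmemC a).mpr (Reachable.refl a)
  have hbC : b.1 ∉ C := fun hb => hab ((hmemC b).mp hb)
  have hclose : ∀ u v : V, s(u, v) ∈ B → u ∈ C → v ∈ C := by
    intro u v hBe huC
    have hu : u ∈ X := hCX huC
    have hv : v ∈ X := (hB u v hBe).mp hu
    by_cases huv : u = v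
    · rwa [← huv]
    · have hadj : G.Adj ⟨u, hu⟩ ⟨v, hv⟩ := And.intro huv hBe
      have hru : G.Reachable a ⟨u, hu⟩ := by
        have := (hmemC ⟨u, hu⟩).mp huC
        exact this
      exact (hmemC ⟨v, hv⟩).mpr (hru.trans hadj.reachable)
  set p : V → Fin 3 := fun x => if x ∈ C then 2 else if x ∈ X then 0 else 1 with hp
  have hpB : ∀ u v : V, s(u, v) ∈ B → p u = p v := by
    intro u v hBe
    have hx := hB u v hBe
    have hc : u ∈ C ↔ v ∈ C :=
      ⟨hclose u v hBe, hclose v u (by rwa [Sym2.eq_swap] at hBe)⟩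
    by_cases h1 : u ∈ C
    · simp [hp, h1, hc.mp h1]
    · have hvC : v ∉ C := fun h => h1 (hc.mpr h)
      by_cases h2 : u ∈ X
      · have hvX : v ∈ X := hx.mp h2
        simp [hp, h1, hvC, h2, hvX]
      · have hvX : v ∉ X := fun h => h2 (hx.mpr h)
        simp [hp, h1, hvC, h2, hvX]
  have hpR : ∀ u v : V, s(u, v) ∈ R → p u ≠ p v := by
    intro u v hRe
    have hx := hR u v hRe
    by_cases h1 : u ∈ X
    · have hv : v ∉ X := hx.mp h1
      have hvC : v ∉ C := fun h => hv (hCX h)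
      by_cases h2 : u ∈ C <;> simp [hp, h1, h2, hv, hvC]
    · have hv : v ∈ X := by
        by_contra hv
        exact h1 (hx.mpr hv)
      have huC : u ∉ C := fun h => h1 (hCX h)
      by_cases h2 : v ∈ C <;> simp [hp, h1, h2, hv, huC]
  have hf1 : Finset.univ.filter (fun x => p x = 1) = Xᶜ := by
    ext x
    simp only [Finset.mem_filter, Finset.mem_univ, true_and, Finset.mem_compl]
    constructor
    · intro hx hX'
      by_cases h2 : x ∈ C
      · simp [hp, h2] at hx
      · simp [hp, h2, hX'] at hx
    · intro hx
      have h2 : x ∉ C := fun h => hx (hCX h)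
      simp [hp, h2, hx]
  have hf0 : Finset.univ.filter (fun x => p x = 0) = X \ C := by
    ext x
    simp only [Finset.mem_filter, Finset.mem_univ, true_and, Finset.mem_sdiff]
    constructor
    · intro hx
      by_cases h2 : x ∈ C
      · simp [hp, h2] at hx
      · by_cases h3 : x ∈ X
        · exact ⟨h3, h2⟩
        · simp [hp, h2, h3] at hx
    · rintro ⟨h3, h2⟩
      simp [hp, h2, h3]
  have hf2 : Finset.univ.filter (fun x => p x = 2) = C := by
    ext x
    simp only [Finset.mem_filter, Finset.mem_univ, true_and]
    constructor
    · intro hx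
      by_cases h2 : x ∈ C
      · exact h2
      · by_cases h3 : x ∈ X <;> simp [hp, h2, h3] at hx
    · intro h2
      simp [hp, h2]
  have hCpos : 1 ≤ C.card := Finset.card_pos.mpr ⟨a.1, haC⟩
  have hClt : C.card < X.card := Finset.card_lt_card (by
    rw [Finset.ssubset_def]
    exact ⟨hCX, fun h => hbC (h b.2)⟩)
  have hXc : Xᶜ.card = Fintype.card V - X.card := Finset.card_compl X
  have hsd : (X \ C).card = X.card - C.card := Finset.card_sdiff_of_subset hCX
  refine hnoplur p hpB hpR ⟨1, ?_⟩
  intro j hj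
  fin_cases j
  · show (Finset.univ.filter fun x => p x = 0).card < (Finset.univ.filter fun x => p x = 1).card
    rw [hf0, hf1]; omega
  · exact absurd rfl hj
  · show (Finset.univ.filter fun x => p x = 2).card < (Finset.univ.filter fun x => p x = 1).card
    rw [hf2, hf1]; omega



/-- **Proposition 7 (endblue).** Let `n ≥ 2` be even and `V` a set of `n` balls
partitioned into `X ⊔ Y` with `|X| = |Y| = n/2`.  Blue edges join two distinct
balls on the same side, red edges join two balls on different sides.  A partition
of `V` into three (possibly empty) parts, encoded as `p : V → Fin 3`, is
admissible if every blue edge lies inside one part and every red edge joins two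
different parts.  If no admissible partition has a part strictly larger than both
other parts, then there are at least `n - 2` blue edges. -/
theorem blue_edges_lower_bound {V : Type*} [Fintype V] [DecidableEq V]
    (n : ℕ) (hn2 : 2 ≤ n) (hne : Even n) (hcard : Fintype.card V = n)
    (X Y : Finset V) (hdisj : Disjoint X Y) (hcover : X ∪ Y = Finset.univ)
    (hX : X.card = n / 2) (hY : Y.card = n / 2)
    (B R : Finset (Sym2 V))
    (hBdiag : ∀ e ∈ B, ¬ e.IsDiag) (hRdiag : ∀ e ∈ R, ¬ e.IsDiag)
    (hBside : ∀ u v : V, s(u, v) ∈ B → ((u ∈ X ∧ v ∈ X) ∨ (u ∈ Y ∧ v ∈ Y)))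
    (hRside : ∀ u v : V, s(u, v) ∈ R → ((u ∈ X ∧ v ∈ Y) ∨ (u ∈ Y ∧ v ∈ X)))
    (hnoplur : ∀ p : V → Fin 3,
      (∀ u v : V, s(u, v) ∈ B → p u = p v) →
      (∀ u v : V, s(u, v) ∈ R → p u ≠ p v) →
      ¬ ∃ i : Fin 3, ∀ j : Fin 3, j ≠ i →
          (Finset.univ.filter fun x => p x = j).card <
            (Finset.univ.filter fun x => p x = i).card) :
    n - 2 ≤ B.card := by
  classical
  have hYX : ∀ x : V, x ∈ Y ↔ x ∉ X := by
    intro x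
    constructor
    · intro hy hx
      exact (Finset.disjoint_left.mp hdisj) hx hy
    · intro hx
      have hm : x ∈ X ∪ Y := by rw [hcover]; exact Finset.mem_univ x
      rcases Finset.mem_union.mp hm with h | h
      · exact absurd h hx
      · exact h
  have hXY : ∀ x : V, x ∈ X ↔ x ∉ Y := by
    intro x
    constructor
    · intro hx hy
      exact (Finset.disjoint_left.mp hdisj) hx hy
    · intro hy
      have hm : x ∈ X ∪ Y := by rw [hcover]; exact Finset.mem_univ x
      rcases Finset.mem_union.mp hm with h | h
      · exact h
      · exact absurd h hy
  have hBX : ∀ u v : V, s(u, v) ∈ B → (u ∈ X ↔ v ∈ X) := by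
    intro u v h
    rcases hBside u v h with ⟨h1, h2⟩ | ⟨h1, h2⟩
    · exact iff_of_true h1 h2
    · exact iff_of_false ((hYX u).mp h1) ((hYX v).mp h2)
  have hBY : ∀ u v : V, s(u, v) ∈ B → (u ∈ Y ↔ v ∈ Y) := by
    intro u v h
    rcases hBside u v h with ⟨h1, h2⟩ | ⟨h1, h2⟩
    · exact iff_of_false ((hXY u).mp h1) ((hXY v).mp h2)
    · exact iff_of_true h1 h2
  have hRX : ∀ u v : V, s(u, v) ∈ R → (u ∈ X ↔ v ∉ X) := by
    intro u v h
    rcases hRside u v h with ⟨h1, h2⟩ | ⟨h1, h2⟩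
    · exact iff_of_true h1 ((hYX v).mp h2)
    · exact iff_of_false ((hYX u).mp h1) (not_not_intro h2)
  have hRY : ∀ u v : V, s(u, v) ∈ R → (u ∈ Y ↔ v ∉ Y) := by
    intro u v h
    rcases hRside u v h with ⟨h1, h2⟩ | ⟨h1, h2⟩
    · exact iff_of_false ((hXY u).mp h1) (not_not_intro h2)
    · exact iff_of_true h1 ((hXY v).mp h2)
  have hhalf : n / 2 + n / 2 = n := by
    obtain ⟨k, hk⟩ := hne
    omega
  have hXc2 : 2 * X.card = Fintype.card V := by rw [hX, hcard]; omega
  have hYc2 : 2 * Y.card = Fintype.card V := by rw [hY, hcard]; omega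
  have hpreX := side_preconnected X B R hXc2 hBX hRX hnoplur
  have hpreY := side_preconnected Y B R hYc2 hBY hRY hnoplur
  have hXne : X.Nonempty := Finset.card_pos.mp (by rw [hX]; omega)
  have hYne : Y.Nonempty := Finset.card_pos.mp (by rw [hY]; omega)
  haveI : Nonempty {x // x ∈ X} := ⟨⟨hXne.choose, hXne.choose_spec⟩⟩
  haveI : Nonempty {x // x ∈ Y} := ⟨⟨hYne.choose, hYne.choose_spec⟩⟩
  set GX := blueGraph X B with hGX
  set GY := blueGraph Y B with hGY
  letI : Fintype GX.edgeSet := Fintype.ofFinite _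
  letI : Fintype GY.edgeSet := Fintype.ofFinite _
  have hconnX : GX.Connected := ⟨hpreX⟩
  have hconnY : GY.Connected := ⟨hpreY⟩
  have hcX := conn_card_le GX.edgeFinset.card GX rfl hconnX
  have hcY := conn_card_le GY.edgeFinset.card GY rfl hconnY
  rw [Fintype.card_coe] at hcX
  rw [Fintype.card_coe] at hcY
  set EX := GX.edgeFinset.image (Sym2.map (Subtype.val)) with hEX
  set EY := GY.edgeFinset.image (Sym2.map (Subtype.val)) with hEYdef
  have hEXcard : EX.card = GX.edgeFinset.card :=
    Finset.card_image_of_injective _ (Sym2.map.injective Subtype.val_injective)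
  have hEYcard : EY.card = GY.edgeFinset.card :=
    Finset.card_image_of_injective _ (Sym2.map.injective Subtype.val_injective)
  have hEXB : EX ⊆ B := by
    intro e he
    obtain ⟨e', he', rfl⟩ := Finset.mem_image.mp he
    induction e' using Sym2.ind with
    | _ u v =>
      have hadj : GX.Adj u v := SimpleGraph.mem_edgeFinset.mp he'
      rw [Sym2.map_pair_eq]
      exact And.right hadj
  have hEYB : EY ⊆ B := by
    intro e he
    obtain ⟨e', he', rfl⟩ := Finset.mem_image.mp he
    induction e' using Sym2.ind with
    | _ u v =>
      have hadj : GY.Adj u v := SimpleGraph.mem_edgeFinset.mp he'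
      rw [Sym2.map_pair_eq]
      exact And.right hadj
  have hEXmem : ∀ e ∈ EX, ∀ x ∈ e, x ∈ X := by
    intro e he
    obtain ⟨e', he', rfl⟩ := Finset.mem_image.mp he
    induction e' using Sym2.ind with
    | _ u v =>
      rw [Sym2.map_pair_eq]
      intro x hx
      rcases Sym2.mem_iff.mp hx with rfl | rfl
      · exact u.2
      · exact v.2
  have hEYmem : ∀ e ∈ EY, ∀ x ∈ e, x ∈ Y := by
    intro e he
    obtain ⟨e', he', rfl⟩ := Finset.mem_image.mp he
    induction e' using Sym2.ind with
    | _ u v =>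
      rw [Sym2.map_pair_eq]
      intro x hx
      rcases Sym2.mem_iff.mp hx with rfl | rfl
      · exact u.2
      · exact v.2
  have hdisjE : Disjoint EX EY := by
    rw [Finset.disjoint_left]
    intro e heX heY
    induction e using Sym2.ind with
    | _ u v =>
      have h1 : u ∈ X := hEXmem _ heX u (Sym2.mem_mk_left u v)
      have h2 : u ∈ Y := hEYmem _ heY u (Sym2.mem_mk_left u v)
      exact (Finset.disjoint_left.mp hdisj) h1 h2
  have hunion : (EX ∪ EY).card ≤ B.card :=
    Finset.card_le_card (Finset.union_subset hEXB hEYB)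
  rw [Finset.card_union_of_disjoint hdisjE] at hunion
  omega
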